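/- arXiv:1702.02375 — 2 statements merged into one kernel-verified Lean document; each statement's English description precedes it below -/
import Mathlib

section
/- Let B be an infinite primitive set of positive integers. Then the window W is topologically regular (W equals the closure of its interior in H) if and only if η is a Toeplitz sequence different from the all-zero sequence. -/
open Set MeasureTheory Filter Topology

namespace BFree

/-- The ambient compact group `∏_{b ∈ B} ℤ/bℤ`. -/
abbrev Gspace (B : Set ℕ+) : Type := ∀ b : B, ZMod ((b : ℕ+) : ℕ)

/-- The diagonal embedding `Δ : ℤ → ∏_{b ∈ B} ℤ/bℤ`. -/
def delta (B : Set ℕ+) : ℤ →+ Gspace B where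
  toFun n := fun b => (n : ZMod ((b : ℕ+) : ℕ))
  map_zero' := by funext b; simp
  map_add' m n := by funext b; simp

/-- `H`, the closure of `Δ(ℤ)`, as a (closed) subgroup of `Gspace B`. -/
def Hgrp (B : Set ℕ+) : AddSubgroup (Gspace B) :=
  (delta B).range.topologicalClosure

/-- `H` as a compact topological group. -/
abbrev Hspace (B : Set ℕ+) : Type := ↥(Hgrp B)

instance (B : Set ℕ+) : CompactSpace (Hspace B) :=
  isCompact_iff_compactSpace.mp
    (IsClosed.isCompact (AddSubgroup.isClosed_topologicalClosure _))

instance (B : Set ℕ+) : BorelSpace (Hspace B) := Subtype.borelSpace _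

/-- The window `W = {h ∈ H : h_b ≠ 0 for all b ∈ B}`. -/
def window (B : Set ℕ+) : Set (Hspace B) :=
  {h | ∀ b : B, (h : Gspace B) b ≠ 0}

/-- `Δ(n)` as an element of `H`. -/
def deltaH (B : Set ℕ+) (n : ℤ) : Hspace B :=
  ⟨delta B n, (delta B).range.le_topologicalClosure ⟨n, rfl⟩⟩

/-- The set of multiples `M_B ⊆ ℤ` of a set `B` of positive integers. -/
def MultSet (B : Set ℕ+) : Set ℤ := {n | ∃ b ∈ B, ((b : ℕ) : ℤ) ∣ n}

/-- The `B`-free set `F_B = ℤ ∖ M_B`. -/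
def FreeSet (B : Set ℕ+) : Set ℤ := {n | ∀ b ∈ B, ¬ ((b : ℕ) : ℤ) ∣ n}

/-- Set of multiples of a set of natural numbers. -/
def MultSetN (C : Set ℕ) : Set ℤ := {n | ∃ c ∈ C, (c : ℤ) ∣ n}

/-- Free set of a set of natural numbers. -/
def FreeSetN (C : Set ℕ) : Set ℤ := {n | ∀ c ∈ C, ¬ (c : ℤ) ∣ n}

/-- `#(M ∩ [1, N]) / N`. -/
noncomputable def densSeq (M : Set ℤ) (N : ℕ) : ℝ :=
  (Nat.card ↥(M ∩ Set.Icc (1 : ℤ) (N : ℤ)) : ℝ) / N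

/-- Lower (asymptotic) density of a set of integers. -/
noncomputable def lowerDensity (M : Set ℤ) : ℝ := Filter.liminf (densSeq M) Filter.atTop

/-- Upper (asymptotic) density of a set of integers. -/
noncomputable def upperDensity (M : Set ℤ) : ℝ := Filter.limsup (densSeq M) Filter.atTop

/-- `B` is taut if removing any element strictly decreases the lower density
of the set of multiples. -/
def Taut (B : Set ℕ+) : Prop :=
  ∀ b ∈ B, lowerDensity (MultSet (B \ {b})) < lowerDensity (MultSet B)

/-- `B` is primitive if no element divides another. -/
def Primitive (B : Set ℕ+) : Prop :=
  ∀ b ∈ B, ∀ b' ∈ B, (b : ℕ) ∣ (b' : ℕ) → b = b'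

/-- `lcm(S)` for a finite set of positive integers. -/
def lcmS (S : Finset ℕ+) : ℕ := S.lcm fun b => (b : ℕ)

/-- `A_S = {gcd(b, lcm S) : b ∈ B}`. -/
def ASet (B : Set ℕ+) (S : Finset ℕ+) : Set ℕ :=
  {m | ∃ b ∈ B, m = Nat.gcd (b : ℕ) (lcmS S)}

/-- The cylinder set `U_S(h) ⊆ H`. -/
def cyl (B : Set ℕ+) (S : Finset ℕ+) (hS : ↑S ⊆ B) (h : Hspace B) : Set (Hspace B) :=
  {h' | ∀ b, ∀ hb : b ∈ S, (h' : Gspace B) ⟨b, hS hb⟩ = (h : Gspace B) ⟨b, hS hb⟩}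

/-- `E = ⋃_{S ⊆ B finite} F_{A_S}`. -/
def Eset (B : Set ℕ+) : Set ℤ :=
  ⋃ (S : Finset ℕ+) (_ : ↑S ⊆ B), FreeSetN (ASet B S)

/-- `A_∞`. -/
def Ainfty (B : Set ℕ+) : Set ℕ :=
  {n | ∀ S : Finset ℕ+, ↑S ⊆ B →
    ∃ S' : Finset ℕ+, S ⊆ S' ∧ ↑S' ⊆ B ∧ n ∈ ASet B S' ∧ ∀ b ∈ S', (b : ℕ) ≠ n}

/-- The indicator `η` of the `B`-free set, as a point of `{0,1}^ℤ`. -/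
noncomputable def eta (B : Set ℕ+) : ℤ → Bool :=
  fun n => @decide (n ∈ FreeSet B) (Classical.propDecidable _)

/-- The left shift on `{0,1}^ℤ`, iterated `k` times (`k ∈ ℤ`). -/
def shift (k : ℤ) (x : ℤ → Bool) : ℤ → Bool := fun n => x (n + k)

/-- The orbit closure `X_η` of `η` in `{0,1}^ℤ`. -/
noncomputable def Xeta (B : Set ℕ+) : Set (ℤ → Bool) :=
  closure {x | ∃ k : ℤ, x = shift k (eta B)}


section Aux

variable {B : Set ℕ+}

lemma natCast_dvd_iff {n : ℕ} {z : ℤ} : (n:ℤ) ∣ z ↔ n ∣ z.natAbs := by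
  rw [← Int.dvd_natAbs, Int.natCast_dvd_natCast]

lemma lcmS_ne_zero (S : Finset ℕ+) : lcmS S ≠ 0 := by
  intro h
  rw [lcmS, Finset.lcm_eq_zero_iff] at h
  obtain ⟨b, _, hb0⟩ := h
  exact (b.ne_zero) hb0

lemma dvd_lcmS {S : Finset ℕ+} {b : ℕ+} (hb : b ∈ S) : (b:ℕ) ∣ lcmS S :=
  Finset.dvd_lcm hb

lemma lcmS_dvd_int {S : Finset ℕ+} {z : ℤ} (h : ∀ b ∈ S, ((b:ℕ):ℤ) ∣ z) :
    ((lcmS S : ℕ):ℤ) ∣ z := by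
  rw [natCast_dvd_iff]
  exact Finset.lcm_dvd fun b hb => natCast_dvd_iff.mp (h b hb)

lemma bezout_shift (b m : ℕ) (z : ℤ) (h : (Nat.gcd b m : ℤ) ∣ z) :
    ∃ j : ℤ, (b:ℤ) ∣ z + j * m := by
  obtain ⟨c, hc⟩ := h
  refine ⟨-(Nat.gcdB b m) * c, ⟨Nat.gcdA b m * c, ?_⟩⟩
  have hg := Nat.gcd_eq_gcd_ab b m
  rw [hc, hg]; ring

lemma crt (P : Finset ℕ) (hP : ∀ p ∈ P, Nat.Prime p) (c : ℕ → ℤ) :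
    ∃ t : ℤ, ∀ p ∈ P, (p:ℤ) ∣ t - c p := by
  classical
  induction P using Finset.induction_on with
  | empty => exact ⟨0, by simp⟩
  | @insert a s ha ih =>
    obtain ⟨t', ht'⟩ := ih (fun p hp => hP p (Finset.mem_insert_of_mem hp))
    have hap : a.Prime := hP a (Finset.mem_insert_self a s)
    have hco : Nat.Coprime a (∏ q ∈ s, q) :=
      Nat.Coprime.prod_right (fun q hq =>
        (Nat.coprime_primes hap (hP q (Finset.mem_insert_of_mem hq))).mpr
          (by rintro rfl; exact ha hq))
    have hb := Nat.gcd_eq_gcd_ab a (∏ q ∈ s, q)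
    rw [Nat.Coprime] at hco
    rw [hco] at hb
    set A := Nat.gcdA a (∏ q ∈ s, q) with hA
    set Bb := Nat.gcdB a (∏ q ∈ s, q) with hBb
    have hcast : ((∏ q ∈ s, q : ℕ) : ℤ) = ∏ q ∈ s, (q:ℤ) := by push_cast; ring
    rw [hcast] at hb
    refine ⟨t' + (∏ q ∈ s, (q:ℤ)) * Bb * (c a - t'), ?_⟩
    intro p hp
    rcases Finset.mem_insert.mp hp with rfl | hps
    · refine ⟨(t' - c p) * A, ?_⟩
      have h1 : (1:ℤ) = (p:ℤ) * A + (∏ q ∈ s, (q:ℤ)) * Bb := by exact_mod_cast hb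
      linear_combination (t' - c p) * h1
    · obtain ⟨k, hk⟩ := ht' p hps
      have hq : (p:ℤ) ∣ ∏ q ∈ s, (q:ℤ) :=
        Finset.dvd_prod_of_mem (fun q : ℕ => (q:ℤ)) hps
      obtain ⟨e, he⟩ := hq
      exact ⟨k + e * Bb * (c a - t'), by rw [he] at *; linear_combination hk⟩

lemma per_prime (x : ℤ) (L : ℕ) (hL : L ≠ 0) (p : ℕ) (hp : p.Prime) :
    ∃ c : ℤ, ∀ t : ℤ, (p:ℤ) ∣ t - c →
      ¬ ((p:ℤ) ^ ((Nat.gcd x.natAbs L).factorization p + 1) ∣ x + (L:ℤ) * t) := by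
  by_cases hx : x = 0
  · subst hx
    simp only [Int.natAbs_zero, Nat.gcd_zero_left]
    refine ⟨1, fun t ht hdvd => ?_⟩
    have hpt : ¬ (p:ℕ) ∣ t.natAbs := by
      intro hd
      have h1 : (p:ℤ) ∣ t := natCast_dvd_iff.mpr hd
      have h2 : (p:ℤ) ∣ 1 := by
        have := dvd_sub h1 ht
        simpa using this
      have h3 : p ∣ 1 := by exact_mod_cast h2
      exact hp.one_lt.ne' (Nat.dvd_one.mp h3)
    have hdvd' : (p:ℕ) ^ (L.factorization p + 1) ∣ L * t.natAbs := by
      have h4 : ((p ^ (L.factorization p + 1) : ℕ) : ℤ) ∣ (L:ℤ) * t := by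
        push_cast
        simpa using hdvd
      rw [natCast_dvd_iff] at h4
      simpa [Int.natAbs_mul] using h4
    have hcop : Nat.Coprime ((p:ℕ) ^ (L.factorization p + 1)) t.natAbs :=
      Nat.Coprime.pow_left _ ((hp.coprime_iff_not_dvd).mpr hpt)
    have hdL : (p:ℕ) ^ (L.factorization p + 1) ∣ L :=
      hcop.dvd_of_dvd_mul_right hdvd'
    have := (Nat.Prime.pow_dvd_iff_le_factorization hp hL).mp hdL
    omega
  · have hxa : x.natAbs ≠ 0 := fun h => hx (Int.natAbs_eq_zero.mp h)
    have hDf : (Nat.gcd x.natAbs L).factorization p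
        = min (x.natAbs.factorization p) (L.factorization p) := by
      rw [Nat.factorization_gcd hxa hL]
      simp [Finsupp.inf_apply]
    set ξ := x.natAbs.factorization p with hξ
    set e := L.factorization p with he
    by_cases hlt : ξ < e
    · refine ⟨0, fun t _ hdvd => ?_⟩
      rw [hDf, min_eq_left hlt.le] at hdvd
      have h2 : (p:ℕ)^(ξ+1) ∣ L :=
        (Nat.Prime.pow_dvd_iff_le_factorization hp hL).mpr hlt
      have h3 : (p:ℤ)^(ξ+1) ∣ (L:ℤ) * t := by
        have : ((p^(ξ+1) : ℕ) : ℤ) ∣ (L:ℤ) := by exact_mod_cast Int.natCast_dvd_natCast.mpr h2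
        push_cast at this
        exact this.mul_right t
      have h4 : (p:ℤ)^(ξ+1) ∣ x := by
        have := dvd_sub hdvd h3
        simpa using this
      have h5 : (p:ℕ)^(ξ+1) ∣ x.natAbs := by
        rw [show ((p:ℤ)^(ξ+1)) = (((p^(ξ+1):ℕ)):ℤ) by push_cast; ring] at h4
        exact natCast_dvd_iff.mp h4
      have := (Nat.Prime.pow_dvd_iff_le_factorization hp hxa).mp h5
      omega
    · push_neg at hlt
      have hmin : (Nat.gcd x.natAbs L).factorization p = e := by
        rw [hDf]; omega
      have hpe : (p:ℕ)^e ∣ L := Nat.ordProj_dvd L p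
      have hLo : ¬ p ∣ L / p^e := Nat.not_dvd_ordCompl hp hL
      have hLeq : (p:ℕ)^e * (L / p^e) = L := Nat.ordProj_mul_ordCompl_eq_self L p
      have hpx : (p:ℕ)^e ∣ x.natAbs :=
        (Nat.Prime.pow_dvd_iff_le_factorization hp hxa).mpr hlt
      have hpxZ : ((p:ℤ))^e ∣ x := by
        rw [show ((p:ℤ)^e) = (((p^e:ℕ)):ℤ) by push_cast; ring]
        exact natCast_dvd_iff.mpr hpx
      obtain ⟨y, hy⟩ := hpxZ
      set Lh := L / p^e with hLh
      have hco : Nat.Coprime p Lh := (hp.coprime_iff_not_dvd).mpr hLo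
      have hbz := Nat.gcd_eq_gcd_ab p Lh
      rw [Nat.Coprime] at hco
      rw [hco] at hbz
      set A := Nat.gcdA p Lh with hA
      set Bb := Nat.gcdB p Lh with hBb
      have hbz' : (1:ℤ) = (p:ℤ) * A + (Lh:ℤ) * Bb := by exact_mod_cast hbz
      refine ⟨Bb * (1 - y), fun t ht hdvd => ?_⟩
      rw [hmin] at hdvd
      have hLZ : (L:ℤ) = (p:ℤ)^e * (Lh:ℤ) := by
        rw [show ((p:ℤ)^e) = (((p^e:ℕ)):ℤ) by push_cast; ring]
        exact_mod_cast (congrArg (fun k : ℕ => (k:ℤ)) hLeq).symm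
      have hsplit : x + (L:ℤ) * t = (p:ℤ)^e * (y + (Lh:ℤ) * t) := by
        rw [hy, hLZ]; ring
      rw [hsplit, pow_succ] at hdvd
      have hpne : ((p:ℤ))^e ≠ 0 := pow_ne_zero _ (by exact_mod_cast hp.pos.ne')
      have hpd : (p:ℤ) ∣ y + (Lh:ℤ) * t := (mul_dvd_mul_iff_left hpne).mp hdvd
      have hone : (p:ℤ) ∣ 1 := by
        have h6 : (1:ℤ) = (y + (Lh:ℤ)*t) - (Lh:ℤ)*(t - Bb*(1 - y)) + (p:ℤ)*(A*(1 - y)) := by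
          linear_combination (1 - y) * hbz'
        rw [h6]
        exact dvd_add (dvd_sub hpd (Dvd.dvd.mul_left ht _)) (Dvd.dvd.mul_right (dvd_refl _) _)
      have h3 : p ∣ 1 := by exact_mod_cast hone
      exact hp.one_lt.ne' (Nat.dvd_one.mp h3)

lemma exists_good_t (x : ℤ) (L Λ : ℕ) (hL : L ≠ 0) :
    ∃ t : ℤ, ∀ p ∈ Λ.primeFactors,
      ¬ ((p:ℤ) ^ ((Nat.gcd x.natAbs L).factorization p + 1) ∣ x + (L:ℤ) * t) := by
  classical
  have hall : ∀ p ∈ Λ.primeFactors, ∃ c : ℤ, ∀ t : ℤ, (p:ℤ) ∣ t - c →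
      ¬ ((p:ℤ) ^ ((Nat.gcd x.natAbs L).factorization p + 1) ∣ x + (L:ℤ) * t) :=
    fun p hp => per_prime x L hL p (Nat.prime_of_mem_primeFactors hp)
  choose! c hc using hall
  obtain ⟨t, ht⟩ := crt Λ.primeFactors (fun p hp => Nat.prime_of_mem_primeFactors hp) c
  exact ⟨t, fun p hp => hc p hp t (ht p hp)⟩

lemma gcd_control {x : ℤ} {L Λ : ℕ} (hL : L ≠ 0) (hΛ : Λ ≠ 0) {t : ℤ}
    (ht : ∀ p ∈ Λ.primeFactors,
      ¬ ((p:ℤ) ^ ((Nat.gcd x.natAbs L).factorization p + 1) ∣ x + (L:ℤ) * t)) :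
    ∀ γ : ℕ, γ ∣ Λ → (γ:ℤ) ∣ x + (L:ℤ) * t → γ ∣ Nat.gcd x.natAbs L := by
  intro γ hγΛ hγm
  set m : ℤ := x + (L:ℤ) * t with hm
  set D : ℕ := Nat.gcd x.natAbs L with hD
  have hγ0 : γ ≠ 0 := by rintro rfl; exact hΛ (Nat.eq_zero_of_zero_dvd hγΛ)
  have hD0 : D ≠ 0 := fun h => hL (Nat.eq_zero_of_gcd_eq_zero_right h)
  by_cases hγ1 : γ = 1
  · rw [hγ1]; exact one_dvd _
  · obtain ⟨p₀, hp₀, hp₀γ⟩ := Nat.exists_prime_and_dvd hγ1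
    have hp₀mem : p₀ ∈ Λ.primeFactors :=
      Nat.mem_primeFactors.mpr ⟨hp₀, hp₀γ.trans hγΛ, hΛ⟩
    have hm0 : m ≠ 0 := by
      intro h0
      exact ht p₀ hp₀mem (by rw [h0]; exact dvd_zero _)
    have hma : m.natAbs ≠ 0 := fun h => hm0 (Int.natAbs_eq_zero.mp h)
    rw [← Nat.factorization_le_iff_dvd hγ0 hD0]
    intro p
    by_cases hsupp : γ.factorization p = 0
    · rw [hsupp]; exact Nat.zero_le _
    · have hpmem : p ∈ γ.primeFactors := by
        rw [← Nat.support_factorization]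
        exact Finsupp.mem_support_iff.mpr hsupp
      have hpp : p.Prime := Nat.prime_of_mem_primeFactors hpmem
      have hpΛ : p ∈ Λ.primeFactors :=
        Nat.mem_primeFactors.mpr ⟨hpp, (Nat.dvd_of_mem_primeFactors hpmem).trans hγΛ, hΛ⟩
      have h1 : p ^ (γ.factorization p) ∣ m.natAbs :=
        (Nat.ordProj_dvd γ p).trans (natCast_dvd_iff.mp hγm)
      have h2 : γ.factorization p ≤ m.natAbs.factorization p :=
        (Nat.Prime.pow_dvd_iff_le_factorization hpp hma).mp h1
      have h3 : m.natAbs.factorization p ≤ D.factorization p := by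
        by_contra hgt
        push_neg at hgt
        have h4 : p ^ (D.factorization p + 1) ∣ m.natAbs :=
          (Nat.Prime.pow_dvd_iff_le_factorization hpp hma).mpr (by omega)
        refine ht p hpΛ ?_
        rw [show ((p:ℤ) ^ (D.factorization p + 1)) = ((p ^ (D.factorization p + 1) : ℕ) : ℤ) by push_cast; ring]
        exact natCast_dvd_iff.mpr h4
      omega

end Aux
section Topo

variable {B : Set ℕ+}

lemma isOpen_cyl {J : Set ↥B} (hJ : J.Finite) (g : Gspace B) :
    IsOpen {y : Gspace B | ∀ i ∈ J, y i = g i} := by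
  have heq : {y : Gspace B | ∀ i ∈ J, y i = g i} = Set.pi J (fun i => {g i}) := by
    ext y; simp [Set.mem_pi]
  rw [heq]
  exact isOpen_set_pi hJ (fun i _ => isOpen_discrete _)

lemma exists_delta_mem (x : Hspace B) {O : Set (Gspace B)} (hO : IsOpen O)
    (hx : (x : Gspace B) ∈ O) : ∃ n : ℤ, delta B n ∈ O := by
  have hx2 : (x : Gspace B) ∈ closure ((delta B).range : Set (Gspace B)) := x.2
  rcases mem_closure_iff.mp hx2 O hO hx with ⟨y, hyO, n, rfl⟩
  exact ⟨n, hyO⟩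

lemma exists_delta_match (x : Hspace B) {J : Set ↥B} (hJ : J.Finite) :
    ∃ n : ℤ, ∀ i ∈ J, delta B n i = (x : Gspace B) i :=
  exists_delta_mem x (isOpen_cyl hJ _) (fun _ _ => rfl)

lemma delta_eq_delta_iff {n m : ℤ} {i : ↥B} :
    delta B n i = delta B m i ↔ (((i:ℕ+):ℕ):ℤ) ∣ m - n := by
  show ((n:ℤ) : ZMod ((i:ℕ+):ℕ)) = ((m:ℤ) : ZMod ((i:ℕ+):ℕ)) ↔ _
  rw [ZMod.intCast_eq_intCast_iff, Int.modEq_iff_dvd]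

lemma delta_eq_zero_iff {n : ℤ} {i : ↥B} :
    delta B n i = 0 ↔ (((i:ℕ+):ℕ):ℤ) ∣ n := by
  haveI : NeZero ((i:ℕ+):ℕ) := ⟨(i:ℕ+).ne_zero⟩
  exact ZMod.intCast_zmod_eq_zero_iff_dvd n _

lemma finite_coord_of_finset (S : Finset ℕ+) : {i : ↥B | (i:ℕ+) ∈ S}.Finite := by
  have : {i : ↥B | (i:ℕ+) ∈ S} = (fun i : ↥B => (i:ℕ+)) ⁻¹' ↑S := rfl
  rw [this]
  exact Set.Finite.preimage (Subtype.val_injective.injOn) S.finite_toSet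

lemma finite_coord_dvd (L : ℕ) (hL : L ≠ 0) : {i : ↥B | ((i:ℕ+):ℕ) ∣ L}.Finite := by
  have : {i : ↥B | ((i:ℕ+):ℕ) ∣ L} = (fun i : ↥B => ((i:ℕ+):ℕ)) ⁻¹' {k | k ∣ L} := rfl
  rw [this]
  refine Set.Finite.preimage ?_ ?_
  · exact Function.Injective.injOn (fun a b h => Subtype.val_injective (PNat.coe_injective h))
  · exact Set.Finite.subset (Set.finite_Icc 0 L) (fun k hk => by
      simp only [Set.mem_Icc]
      exact ⟨Nat.zero_le _, Nat.le_of_dvd (Nat.pos_of_ne_zero hL) hk⟩)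

end Topo

section GoodSec

variable {B : Set ℕ+}

/-- `z` has a "good" finite witness set. -/
def GoodW (B : Set ℕ+) (z : ℤ) : Prop :=
  ∃ T : Finset ℕ+, ↑T ⊆ B ∧ ∀ b ∈ B, ¬ ((Nat.gcd ((b:ℕ+):ℕ) (lcmS T) : ℤ) ∣ z)

lemma eta_eq_true_iff {n : ℤ} : eta B n = true ↔ n ∈ FreeSet B := by
  unfold eta
  exact @decide_eq_true_iff _ (Classical.propDecidable _)

lemma eta_eq_false_iff {n : ℤ} : eta B n = false ↔ n ∉ FreeSet B := by
  unfold eta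
  simp only [decide_eq_false_iff_not]

lemma freeSet_of_good {z : ℤ} (hz : z ∈ FreeSet B) (T : Finset ℕ+)
    (hT : ∀ b ∈ B, ¬ ((Nat.gcd ((b:ℕ+):ℕ) (lcmS T) : ℤ) ∣ z)) :
    ∀ j : ℤ, z + j * (lcmS T) ∈ FreeSet B := by
  intro j b hb hdvd
  refine hT b hb ?_
  have h1 : (Nat.gcd ((b:ℕ+):ℕ) (lcmS T) : ℤ) ∣ ((b:ℕ):ℤ) :=
    Int.natCast_dvd_natCast.mpr (Nat.gcd_dvd_left _ _)
  have h2 : (Nat.gcd ((b:ℕ+):ℕ) (lcmS T) : ℤ) ∣ ((lcmS T : ℕ):ℤ) :=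
    Int.natCast_dvd_natCast.mpr (Nat.gcd_dvd_right _ _)
  have h3 : (Nat.gcd ((b:ℕ+):ℕ) (lcmS T) : ℤ) ∣ z + j * (lcmS T) := h1.trans hdvd
  have h4 := dvd_sub h3 (h2.mul_left j)
  simpa using h4

lemma good_of_period {z : ℤ} {m : ℕ} (hm : 0 < m)
    (hper : ∀ j : ℤ, z + j * m ∈ FreeSet B) : GoodW B z := by
  classical
  set V : Finset ℕ := m.divisors.filter
    (fun g => ∃ b : ℕ+, b ∈ B ∧ g = Nat.gcd ((b:ℕ+):ℕ) m) with hVdef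
  have hwit : ∀ g ∈ V, ∃ b : ℕ+, b ∈ B ∧ g = Nat.gcd ((b:ℕ+):ℕ) m := by
    intro g hg
    exact (Finset.mem_filter.mp hg).2
  choose w hwB hwg using hwit
  refine ⟨V.attach.image (fun g => w g.1 g.2), ?_, ?_⟩
  · intro b hb
    simp only [Finset.coe_image, Set.mem_image, Finset.mem_coe, Finset.mem_attach] at hb
    obtain ⟨g, -, rfl⟩ := hb
    exact hwB g.1 g.2
  · intro b hbB hdvd
    set T := V.attach.image (fun g => w g.1 g.2) with hTdef
    have hgV : Nat.gcd ((b:ℕ+):ℕ) m ∈ V := by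
      refine Finset.mem_filter.mpr ⟨Nat.mem_divisors.mpr ⟨Nat.gcd_dvd_right _ _, hm.ne'⟩, b, hbB, rfl⟩
    have hmemT : w _ hgV ∈ T := Finset.mem_image.mpr ⟨⟨_, hgV⟩, Finset.mem_attach _ _, rfl⟩
    have h1 : Nat.gcd ((b:ℕ+):ℕ) m ∣ lcmS T := by
      have := hwg _ hgV
      calc Nat.gcd ((b:ℕ+):ℕ) m = Nat.gcd (((w _ hgV):ℕ+):ℕ) m := by rw [← this]
        _ ∣ ((w _ hgV : ℕ+):ℕ) := Nat.gcd_dvd_left _ _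
        _ ∣ lcmS T := dvd_lcmS hmemT
    have h2 : Nat.gcd ((b:ℕ+):ℕ) m ∣ Nat.gcd ((b:ℕ+):ℕ) (lcmS T) :=
      Nat.dvd_gcd (Nat.gcd_dvd_left _ _) h1
    have h3 : (Nat.gcd ((b:ℕ+):ℕ) m : ℤ) ∣ z :=
      (Int.natCast_dvd_natCast.mpr h2).trans hdvd
    obtain ⟨j, hj⟩ := bezout_shift ((b:ℕ+):ℕ) m z h3
    exact hper j b hbB hj

end GoodSec
section Main

variable {B : Set ℕ+}

/-- Toeplitz (every free point good) implies the window is topologically regular. -/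
lemma regular_of_toeplitz (htoep : ∀ z : ℤ, z ∈ FreeSet B → GoodW B z) :
    window B = closure (interior (window B)) := by
  classical
  apply Set.Subset.antisymm
  · -- W ⊆ closure (int W)
    intro h hhW
    rw [mem_closure_iff]
    intro Opn hOpn hhOpn
    obtain ⟨O, hOopen, hOeq⟩ := isOpen_induced_iff.mp hOpn
    have hhO : (h : Gspace B) ∈ O := by rw [← hOeq] at hhOpn; exact hhOpn
    obtain ⟨I, u, hu, hpi⟩ := isOpen_pi_iff.mp hOopen _ hhO
    set S : Finset ℕ+ := Finset.image Subtype.val I with hSdef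
    set L : ℕ := lcmS S with hLdef
    have hL0 : L ≠ 0 := lcmS_ne_zero S
    -- match h on I and on all coordinates dividing L
    obtain ⟨x, hx⟩ := exists_delta_match h
      ((I.finite_toSet).union (finite_coord_dvd L hL0))
    set D : ℕ := Nat.gcd x.natAbs L with hDdef
    have hD0 : D ≠ 0 := fun h0 => hL0 (Nat.eq_zero_of_gcd_eq_zero_right h0)
    have hDF : ((D:ℕ):ℤ) ∈ FreeSet B := by
      intro b hb hdvd
      have hbD : ((b:ℕ+):ℕ) ∣ D := Int.natCast_dvd_natCast.mp hdvd
      have hbL : ((b:ℕ+):ℕ) ∣ L := hbD.trans (Nat.gcd_dvd_right _ _)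
      have hbx : (((b:ℕ+):ℕ):ℤ) ∣ x :=
        natCast_dvd_iff.mpr (hbD.trans (Nat.gcd_dvd_left _ _))
      have hcoord : (h : Gspace B) ⟨b, hb⟩ = 0 := by
        rw [← hx ⟨b, hb⟩ (Or.inr hbL)]
        exact delta_eq_zero_iff.mpr hbx
      exact hhW ⟨b, hb⟩ hcoord
    obtain ⟨T', hT'B, hT'good⟩ := htoep _ hDF
    set Λ : ℕ := lcmS T' with hΛdef
    have hΛ0 : Λ ≠ 0 := lcmS_ne_zero T'
    obtain ⟨t, ht⟩ := exists_good_t x L Λ hL0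
    set m : ℤ := x + (L:ℤ) * t with hmdef
    have hγ : ∀ γ : ℕ, γ ∣ Λ → (γ:ℤ) ∣ m → γ ∣ D := by
      intro γ h1 h2
      exact gcd_control hL0 hΛ0 ht γ h1 h2
    have hGood : ∀ b : ℕ+, b ∈ B → ¬ ((Nat.gcd ((b:ℕ+):ℕ) Λ : ℤ) ∣ m) := by
      intro b hb hdvd
      refine hT'good b hb ?_
      exact Int.natCast_dvd_natCast.mpr (hγ _ (Nat.gcd_dvd_right _ _) hdvd)
    -- the cylinder over T' around delta m sits inside the window
    set JT : Set ↥B := {i : ↥B | (i:ℕ+) ∈ T'} with hJTdef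
    have hJTfin : JT.Finite := finite_coord_of_finset T'
    set Cyl : Set (Hspace B) :=
      Subtype.val ⁻¹' {y : Gspace B | ∀ i ∈ JT, y i = delta B m i} with hCyl
    have hCylW : Cyl ⊆ window B := by
      intro y hy i0
      intro h0
      obtain ⟨v, hv⟩ := exists_delta_match y (hJTfin.union (Set.finite_singleton i0))
      have hΛvm : ((Λ:ℕ):ℤ) ∣ v - m := by
        apply lcmS_dvd_int
        intro b hbT'
        have hiJT : (⟨b, hT'B hbT'⟩ : ↥B) ∈ JT := hbT'
        have e1 : delta B v ⟨b, hT'B hbT'⟩ = delta B m ⟨b, hT'B hbT'⟩ := by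
          rw [hv ⟨b, hT'B hbT'⟩ (Or.inl hiJT)]
          exact hy ⟨b, hT'B hbT'⟩ hiJT
        have h2 := delta_eq_delta_iff.mp e1
        simpa [neg_sub] using dvd_neg.mpr h2
      have hi0v : (((i0:ℕ+):ℕ):ℤ) ∣ v := by
        apply delta_eq_zero_iff.mp
        rw [hv i0 (Or.inr rfl)]
        exact h0
      have d1 : ((Nat.gcd ((i0:ℕ+):ℕ) Λ : ℕ):ℤ) ∣ v :=
        (Int.natCast_dvd_natCast.mpr (Nat.gcd_dvd_left _ _)).trans hi0v
      have d2 : ((Nat.gcd ((i0:ℕ+):ℕ) Λ : ℕ):ℤ) ∣ v - m :=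
        (Int.natCast_dvd_natCast.mpr (Nat.gcd_dvd_right _ _)).trans hΛvm
      have d3 : ((Nat.gcd ((i0:ℕ+):ℕ) Λ : ℕ):ℤ) ∣ m := by
        have := dvd_sub d1 d2
        simpa using this
      exact hGood i0 i0.2 d3
    have hCylOpen : IsOpen Cyl := (isOpen_cyl hJTfin _).preimage continuous_subtype_val
    have hmCyl : deltaH B m ∈ Cyl := fun i _ => rfl
    have hmInt : deltaH B m ∈ interior (window B) :=
      mem_interior.mpr ⟨Cyl, hCylW, hCylOpen, hmCyl⟩
    have hmO : deltaH B m ∈ Opn := by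
      rw [← hOeq]
      apply hpi
      rw [Set.mem_pi]
      intro i hi
      have hiI : i ∈ I := hi
      have hiS : (i:ℕ+) ∈ S := Finset.mem_image_of_mem _ hiI
      have hdL : (((i:ℕ+):ℕ):ℤ) ∣ (L:ℤ) := Int.natCast_dvd_natCast.mpr (dvd_lcmS hiS)
      have e2 : delta B m i = delta B x i := by
        apply delta_eq_delta_iff.mpr
        have : x - m = -((L:ℤ) * t) := by rw [hmdef]; ring
        rw [this]
        exact dvd_neg.mpr (hdL.mul_right t)
      have e1 : delta B m i = (h : Gspace B) i := by
        rw [e2]; exact hx i (Or.inl hiI)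
      show delta B m i ∈ u i
      rw [e1]
      exact (hu i hiI).2
    exact ⟨deltaH B m, hmO, hmInt⟩
  · -- closure (int W) ⊆ W
    intro s hs i
    intro h0
    have hop : IsOpen {y : Hspace B | (y : Gspace B) i = 0} := by
      have : {y : Hspace B | (y : Gspace B) i = 0}
          = Subtype.val ⁻¹' {y : Gspace B | ∀ j ∈ ({i} : Set ↥B), y j = (0 : ZMod _)} := by
        ext y; simp
      rw [this]
      exact (isOpen_cyl (Set.finite_singleton i) _).preimage continuous_subtype_val
    obtain ⟨y, hy0, hyint⟩ := mem_closure_iff.mp hs _ hop h0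
    exact interior_subset hyint i hy0

end Main
section Main2

variable {B : Set ℕ+}

/-- Regularity of the window implies every free point is good. -/
lemma good_of_regular (hBne : B.Nonempty)
    (hreg : window B = closure (interior (window B))) :
    ∀ z : ℤ, z ∈ FreeSet B → GoodW B z := by
  classical
  intro n hnF
  by_contra hng
  rw [GoodW] at hng
  push_neg at hng
  -- hng : ∀ T, ↑T ⊆ B → ∃ b ∈ B, (gcd b (lcmS T) : ℤ) ∣ n
  have hn0 : n ≠ 0 := by
    rintro rfl
    obtain ⟨b, hb⟩ := hBne
    exact hnF b hb (dvd_zero _)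
  have hna : n.natAbs ≠ 0 := fun h => hn0 (Int.natAbs_eq_zero.mp h)
  set V : Finset ℕ := n.natAbs.divisors.filter
    (fun g => ∃ T : Finset ℕ+, ↑T ⊆ B ∧ ∃ b : ℕ+, b ∈ B ∧ g = Nat.gcd ((b:ℕ+):ℕ) (lcmS T))
    with hVdef
  set d : ℕ := V.lcm id with hddef
  have hdn : (d:ℤ) ∣ n := by
    rw [natCast_dvd_iff]
    exact Finset.lcm_dvd fun g hg => (Nat.mem_divisors.mp (Finset.mem_filter.mp hg).1).1
  have hdF : (d:ℤ) ∈ FreeSet B := fun b hb hdvd => hnF b hb (hdvd.trans hdn)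
  -- build S with d ∣ lcmS S
  have hwit : ∀ g ∈ V, ∃ T : Finset ℕ+, ↑T ⊆ B ∧ g ∣ lcmS T := by
    intro g hg
    obtain ⟨T, hTB, b, _, rfl⟩ := (Finset.mem_filter.mp hg).2
    exact ⟨T, hTB, Nat.gcd_dvd_right _ _⟩
  choose TW hTWB hTWd using hwit
  set S : Finset ℕ+ := V.attach.biUnion (fun g => TW g.1 g.2) with hSdef
  have hSB : ↑S ⊆ B := by
    intro b hb
    rw [Finset.coe_biUnion] at hb
    simp only [Set.mem_iUnion, Finset.mem_coe, Finset.mem_attach, exists_true_left] at hb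
    obtain ⟨g, hg⟩ := hb
    exact hTWB g.1 g.2 hg
  have hdlcm : d ∣ lcmS S := by
    apply Finset.lcm_dvd
    intro g hg
    refine (hTWd g hg).trans ?_
    apply Finset.lcm_dvd
    intro b hb
    exact dvd_lcmS (Finset.mem_biUnion.mpr ⟨⟨g, hg⟩, Finset.mem_attach _ _, hb⟩)
  -- Δd ∈ W
  have hdW : deltaH B (d:ℤ) ∈ window B := by
    intro i hi0
    exact hdF i i.2 (delta_eq_zero_iff.mp hi0)
  have hdcl : deltaH B (d:ℤ) ∈ closure (interior (window B)) := by
    rw [← hreg]; exact hdW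
  -- take the S-cylinder neighbourhood of Δd
  set Jd : Set ↥B := {i : ↥B | (i:ℕ+) ∈ S} with hJdDef
  have hJdfin : Jd.Finite := finite_coord_of_finset S
  set U : Set (Hspace B) :=
    Subtype.val ⁻¹' {y : Gspace B | ∀ i ∈ Jd, y i = delta B (d:ℤ) i} with hUdef
  have hUopen : IsOpen U := (isOpen_cyl hJdfin _).preimage continuous_subtype_val
  have hdU : deltaH B (d:ℤ) ∈ U := fun i _ => rfl
  obtain ⟨h', hh'U, hh'int⟩ := mem_closure_iff.mp hdcl U hUopen hdU
  -- structure of the interior point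
  obtain ⟨Osub, hOsub_sub, hOsub_open, hh'Osub⟩ := mem_interior.mp hh'int
  obtain ⟨O, hOopen, hOeq⟩ := isOpen_induced_iff.mp hOsub_open
  have hh'O : (h' : Gspace B) ∈ O := by rw [← hOeq] at hh'Osub; exact hh'Osub
  obtain ⟨I, u, hu, hpi⟩ := isOpen_pi_iff.mp hOopen _ hh'O
  -- integer matching h' on I and Jd
  obtain ⟨w, hw⟩ := exists_delta_match h' ((I.finite_toSet).union hJdfin)
  have hSd : ((lcmS S : ℕ):ℤ) ∣ w - (d:ℤ) := by
    apply lcmS_dvd_int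
    intro b hbS
    have hiJ : (⟨b, hSB hbS⟩ : ↥B) ∈ Jd := hbS
    have e1 : delta B w ⟨b, hSB hbS⟩ = delta B (d:ℤ) ⟨b, hSB hbS⟩ := by
      rw [hw ⟨b, hSB hbS⟩ (Or.inr hiJ)]
      exact hh'U ⟨b, hSB hbS⟩ hiJ
    have h2 := delta_eq_delta_iff.mp e1
    simpa [neg_sub] using dvd_neg.mpr h2
  have hdw : (d:ℤ) ∣ w := by
    have h3 : (d:ℤ) ∣ w - (d:ℤ) := (Int.natCast_dvd_natCast.mpr hdlcm).trans hSd
    have := dvd_add h3 (dvd_refl (d:ℤ))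
    simpa using this
  -- bad witness at level T' = image of I
  set T' : Finset ℕ+ := Finset.image Subtype.val I with hT'def
  have hT'B : ↑T' ⊆ B := by
    intro b hb
    rw [Finset.coe_image] at hb
    obtain ⟨i, _, rfl⟩ := hb
    exact i.2
  obtain ⟨b, hbB, hgdvd⟩ := hng T' hT'B
  have hgV : Nat.gcd ((b:ℕ+):ℕ) (lcmS T') ∈ V := by
    refine Finset.mem_filter.mpr ⟨Nat.mem_divisors.mpr ⟨natCast_dvd_iff.mp hgdvd, hna⟩,
      T', hT'B, b, hbB, rfl⟩
  have hgw : (Nat.gcd ((b:ℕ+):ℕ) (lcmS T') : ℤ) ∣ w :=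
    (Int.natCast_dvd_natCast.mpr (Finset.dvd_lcm (f := id) hgV)).trans hdw
  obtain ⟨j, hj⟩ := bezout_shift ((b:ℕ+):ℕ) (lcmS T') w hgw
  set w' : ℤ := w + j * (lcmS T') with hw'def
  have hw'I : ∀ i ∈ I, delta B w' i = (h' : Gspace B) i := by
    intro i hi
    have hiT : (i:ℕ+) ∈ T' := Finset.mem_image_of_mem _ hi
    have e2 : delta B w' i = delta B w i := by
      apply delta_eq_delta_iff.mpr
      have : w - w' = -(j * (lcmS T')) := by rw [hw'def]; ring
      rw [this]
      exact dvd_neg.mpr ((Int.natCast_dvd_natCast.mpr (dvd_lcmS hiT)).mul_left j)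
    rw [e2]
    exact hw i (Or.inl hi)
  have hw'W : deltaH B w' ∈ window B := by
    apply hOsub_sub
    rw [← hOeq]
    apply hpi
    rw [Set.mem_pi]
    intro i hi
    show delta B w' i ∈ u i
    rw [hw'I i hi]
    exact (hu i hi).2
  have : delta B w' ⟨b, hbB⟩ = 0 := delta_eq_zero_iff.mpr hj
  exact hw'W ⟨b, hbB⟩ this

end Main2
/-- For an infinite primitive set `B` of positive integers, the window `W` is
topologically regular iff `η` is a Toeplitz sequence different from the all-zero sequence. -/
theorem statement4 (B : Set ℕ+) (hB : B.Infinite) (hprim : Primitive B) :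
    window B = closure (interior (window B)) ↔
      ((∀ n : ℤ, ∃ m : ℕ, 0 < m ∧ ∀ j : ℤ, eta B (n + j * m) = eta B n) ∧
        eta B ≠ fun _ => false) := by
  have h1B : (1:ℕ+) ∉ B := by
    intro h1
    obtain ⟨b, hbB, hbne⟩ : ∃ b ∈ B, b ≠ (1:ℕ+) := by
      obtain ⟨b, hb⟩ := (hB.diff (Set.finite_singleton 1)).nonempty
      exact ⟨b, hb.1, by simpa using hb.2⟩
    exact hbne (hprim 1 h1 b hbB (one_dvd _)).symm
  have h1F : (1:ℤ) ∈ FreeSet B := by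
    intro b hb hdvd
    have hb1 : ((b:ℕ+):ℕ) ∣ 1 := by
      have := natCast_dvd_iff.mp hdvd
      simpa using this
    have hbeq : b = 1 := by
      have : ((b:ℕ+):ℕ) = 1 := Nat.dvd_one.mp hb1
      exact PNat.coe_injective this
    exact h1B (hbeq ▸ hb)
  constructor
  · intro hreg
    refine ⟨?_, ?_⟩
    · intro n
      by_cases hn : n ∈ FreeSet B
      · obtain ⟨T, hTB, hTg⟩ := good_of_regular hB.nonempty hreg n hn
        refine ⟨lcmS T, Nat.pos_of_ne_zero (lcmS_ne_zero T), fun j => ?_⟩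
        rw [eta_eq_true_iff.mpr (freeSet_of_good hn T hTg j), eta_eq_true_iff.mpr hn]
      · have hn' := hn
        rw [FreeSet, Set.mem_setOf_eq] at hn'
        push_neg at hn'
        obtain ⟨b, hbB, hbdvd⟩ := hn'
        refine ⟨((b:ℕ+):ℕ), b.pos, fun j => ?_⟩
        have hMem : n + j * (((b:ℕ+):ℕ):ℤ) ∉ FreeSet B := by
          intro hF
          exact hF b hbB (dvd_add hbdvd (Dvd.dvd.mul_left (dvd_refl _) j))
        rw [eta_eq_false_iff.mpr hMem, eta_eq_false_iff.mpr hn]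
    · intro heq
      have h3 : eta B 1 = true := eta_eq_true_iff.mpr h1F
      rw [heq] at h3
      simp at h3
  · rintro ⟨htoep, -⟩
    apply regular_of_toeplitz
    intro z hz
    obtain ⟨m, hm, hper⟩ := htoep z
    have hperF : ∀ j : ℤ, z + j * m ∈ FreeSet B := fun j =>
      eta_eq_true_iff.mp (by rw [hper j]; exact eta_eq_true_iff.mpr hz)
    exact good_of_period hm hperF

end BFree
end

section
/- Let B be an infinite set of positive integers. Then m_H(int(W)) = sup over finite S ⊆ B of the natural density d(F_{A_S}) (which exists since F_{A_S} is invariant under translation by lcm(S)), and this supremum is at most the lower density of E. -/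
open Set MeasureTheory Filter Topology

namespace BFree

open scoped ENNReal

lemma lcmS_pos (S : Finset ℕ+) : 0 < lcmS S := by
  rw [Nat.pos_iff_ne_zero, lcmS]
  intro h
  rw [Finset.lcm_eq_zero_iff] at h
  obtain ⟨b, _, hb⟩ := h
  exact b.pos.ne' hb

lemma aset_dvd {B : Set ℕ+} {S : Finset ℕ+} {a : ℕ} (ha : a ∈ ASet B S) : a ∣ lcmS S := by
  obtain ⟨b, _, rfl⟩ := ha
  exact Nat.gcd_dvd_right _ _

lemma free_periodic (B : Set ℕ+) (S : Finset ℕ+) (n : ℤ) :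
    (n + (lcmS S : ℤ)) ∈ FreeSetN (ASet B S) ↔ n ∈ FreeSetN (ASet B S) := by
  constructor
  · intro h c hc hdvd
    exact h c hc (dvd_add hdvd (Int.natCast_dvd_natCast.mpr (aset_dvd hc)))
  · intro h c hc hdvd
    refine h c hc ?_
    have := dvd_sub hdvd (Int.natCast_dvd_natCast.mpr (aset_dvd hc))
    simpa using this

open Classical in
noncomputable def Jc (B : Set ℕ+) (S : Finset ℕ+) : ℕ :=
  ((Finset.range (lcmS S)).filter (fun i : ℕ => ((i:ℤ)+1) ∈ FreeSetN (ASet B S))).card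

lemma densSeq_nonneg (M : Set ℤ) (N : ℕ) : 0 ≤ densSeq M N :=
  div_nonneg (Nat.cast_nonneg _) (Nat.cast_nonneg _)

lemma densSeq_le_one (M : Set ℤ) (N : ℕ) : densSeq M N ≤ 1 := by
  rw [densSeq]
  rcases Nat.eq_zero_or_pos N with h | h
  · simp [h]
  · have hN : (0:ℝ) < N := by exact_mod_cast h
    rw [div_le_one hN]
    have hfin : (Set.Icc (1:ℤ) (N:ℤ)).Finite := Set.finite_Icc _ _
    have h1 : Nat.card ↥(M ∩ Set.Icc (1:ℤ) (N:ℤ)) ≤ Nat.card ↥(Set.Icc (1:ℤ) (N:ℤ)) := by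
      rw [Nat.card_coe_set_eq, Nat.card_coe_set_eq]
      exact Set.ncard_le_ncard Set.inter_subset_right hfin
    have h2 : Nat.card ↥(Set.Icc (1:ℤ) (N:ℤ)) = N := by
      rw [Nat.card_coe_set_eq, ← Finset.coe_Icc, Set.ncard_coe_finset, Int.card_Icc]
      simp
    calc (Nat.card ↥(M ∩ Set.Icc (1:ℤ) (N:ℤ)) : ℝ) ≤ (Nat.card ↥(Set.Icc (1:ℤ) (N:ℤ)) : ℝ) := by
          exact_mod_cast h1
      _ = N := by rw [h2]

lemma densSeq_mono {M M' : Set ℤ} (h : M ⊆ M') (N : ℕ) : densSeq M N ≤ densSeq M' N := by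
  rw [densSeq, densSeq]
  rcases Nat.eq_zero_or_pos N with h0 | h0
  · subst h0; simp
  · have hN : (0:ℝ) < N := by exact_mod_cast h0
    have hfin : (M' ∩ Set.Icc (1:ℤ) (N:ℤ)).Finite :=
      Set.Finite.inter_of_right (Set.finite_Icc _ _) _
    have hcard : Nat.card ↥(M ∩ Set.Icc (1:ℤ) (N:ℤ)) ≤ Nat.card ↥(M' ∩ Set.Icc (1:ℤ) (N:ℤ)) := by
      rw [Nat.card_coe_set_eq, Nat.card_coe_set_eq]
      exact Set.ncard_le_ncard (Set.inter_subset_inter_left _ h) hfin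
    exact div_le_div_of_nonneg_right (by exact_mod_cast hcard) hN.le

lemma lowerDensity_mono {M M' : Set ℤ} (h : M ⊆ M') : lowerDensity M ≤ lowerDensity M' := by
  refine Filter.liminf_le_liminf (Filter.Eventually.of_forall fun N => densSeq_mono h N) ?_ ?_
  · exact Filter.isBoundedUnder_of ⟨0, fun N => densSeq_nonneg M N⟩
  · exact (Filter.isBoundedUnder_of ⟨1, fun N => densSeq_le_one M' N⟩).isCoboundedUnder_ge

private lemma g_periodic_iter (g : ℕ → ℕ) (L : ℕ) (hg : ∀ i, g (i + L) = g i) :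
    ∀ q i, g (i + q * L) = g i := by
  intro q
  induction q with
  | zero => simp
  | succ q ih =>
    intro i
    have : i + (q + 1) * L = (i + q * L) + L := by ring
    rw [this, hg, ih]

private lemma sum_periodic_nat (g : ℕ → ℕ) (L : ℕ) (hg : ∀ i, g (i + L) = g i) (q : ℕ) :
    ∑ i ∈ Finset.range (q * L), g i = q * ∑ i ∈ Finset.range L, g i := by
  induction q with
  | zero => simp
  | succ q ih =>
    have h1 : (q + 1) * L = q * L + L := by ring
    rw [h1, Finset.sum_range_add, ih]
    have : ∀ x ∈ Finset.range L, g (q * L + x) = g x := by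
      intro x _
      rw [add_comm, g_periodic_iter g L hg]
    rw [Finset.sum_congr rfl this]
    ring

private lemma card_filter_Icc (P : ℤ → Prop) [DecidablePred P] (N : ℕ) :
    ((Finset.Icc (1:ℤ) (N:ℤ)).filter P).card
      = ∑ i ∈ Finset.range N, (if P ((i:ℤ)+1) then 1 else 0) := by
  induction N with
  | zero => simp
  | succ N ih =>
    have hins : Finset.Icc (1:ℤ) ((N+1 : ℕ) : ℤ) = insert ((N:ℤ)+1) (Finset.Icc (1:ℤ) (N:ℤ)) := by
      ext x
      simp only [Finset.mem_Icc, Finset.mem_insert]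
      push_cast
      omega
    rw [hins, Finset.filter_insert, Finset.sum_range_succ, ← ih]
    by_cases h : P ((N:ℤ)+1)
    · rw [if_pos h, if_pos h, Finset.card_insert_of_notMem]
      intro hmem
      have := Finset.mem_of_mem_filter _ hmem
      simp only [Finset.mem_Icc] at this
      omega
    · rw [if_neg h, if_neg h, add_zero]

private lemma natcard_eq_filter (P : ℤ → Prop) [DecidablePred P] (N : ℕ) :
    Nat.card ↥({n | P n} ∩ Set.Icc (1:ℤ) (N:ℤ))
      = ((Finset.Icc (1:ℤ) (N:ℤ)).filter P).card := by
  have hset : {n | P n} ∩ Set.Icc (1:ℤ) (N:ℤ)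
      = ↑((Finset.Icc (1:ℤ) (N:ℤ)).filter P) := by
    ext x
    simp [Set.mem_inter_iff, Finset.coe_filter, and_comm]
  rw [hset, Nat.card_coe_set_eq, Set.ncard_coe_finset]

/-- main counting estimate -/
private lemma count_bounds (P : ℤ → Prop) [DecidablePred P] (L : ℕ) (hL : 0 < L)
    (hP : ∀ n : ℤ, P (n + L) ↔ P n) (N : ℕ) :
    (N / L) * (∑ i ∈ Finset.range L, (if P ((i:ℤ)+1) then 1 else 0))
      ≤ ∑ i ∈ Finset.range N, (if P ((i:ℤ)+1) then 1 else 0)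
    ∧ ∑ i ∈ Finset.range N, (if P ((i:ℤ)+1) then 1 else 0)
      ≤ (N / L) * (∑ i ∈ Finset.range L, (if P ((i:ℤ)+1) then 1 else 0)) + L := by
  set g : ℕ → ℕ := fun i => if P ((i:ℤ)+1) then 1 else 0 with hg_def
  have hg : ∀ i, g (i + L) = g i := by
    intro i
    have : ((i + L : ℕ) : ℤ) + 1 = ((i:ℤ)+1) + (L:ℤ) := by push_cast; ring
    simp only [hg_def, this, hP]
  set q := N / L with hq
  set r := N % L with hr
  have hNqr : N = q * L + r := by rw [hq, hr, Nat.mul_comm]; exact (Nat.div_add_mod N L).symm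
  have hrL : r < L := Nat.mod_lt _ hL
  have hsplit : ∑ i ∈ Finset.range N, g i
      = q * (∑ i ∈ Finset.range L, g i) + ∑ x ∈ Finset.range r, g (q * L + x) := by
    rw [hNqr, Finset.sum_range_add, sum_periodic_nat g L hg]
  constructor
  · rw [hsplit]; exact Nat.le_add_right _ _
  · rw [hsplit]
    have h2 : ∑ x ∈ Finset.range r, g (q * L + x) ≤ ∑ x ∈ Finset.range r, 1 := by
      apply Finset.sum_le_sum
      intro x _
      simp only [hg_def]
      split <;> omega
    simp only [Finset.sum_const, Finset.card_range, smul_eq_mul, mul_one] at h2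
    exact add_le_add_right (le_of_lt (lt_of_le_of_lt h2 hrL)) _


lemma tendsto_densSeq_periodic (P : ℤ → Prop) [DecidablePred P] (L : ℕ) (hL : 0 < L)
    (hP : ∀ n : ℤ, P (n + L) ↔ P n) :
    Tendsto (densSeq {n | P n}) atTop
      (𝓝 ((((Finset.range L).filter (fun i : ℕ => P ((i:ℤ)+1))).card : ℝ) / (L:ℝ))) := by
  set J : ℕ := ((Finset.range L).filter (fun i : ℕ => P ((i:ℤ)+1))).card with hJ_def
  have hJsum : J = ∑ i ∈ Finset.range L, (if P ((i:ℤ)+1) then 1 else 0) := by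
    rw [hJ_def, Finset.card_filter]
  have hJle : J ≤ L := by
    rw [hJ_def]
    exact le_trans (Finset.card_filter_le _ _) (le_of_eq (Finset.card_range L))
  have hLr : (0:ℝ) < L := by exact_mod_cast hL
  have hbound : ∀ N : ℕ, 1 ≤ N → ‖densSeq {n | P n} N - (J:ℝ)/L‖ ≤ (L:ℝ)/N := by
    intro N hN1
    have hN : (0:ℝ) < N := by exact_mod_cast hN1
    set c : ℕ := ∑ i ∈ Finset.range N, (if P ((i:ℤ)+1) then 1 else 0) with hc_def
    have hds : densSeq {n | P n} N = (c:ℝ)/N := by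
      rw [densSeq, natcard_eq_filter P N, card_filter_Icc P N]
    obtain ⟨hlow, hhigh⟩ := count_bounds P L hL hP N
    set q : ℕ := N / L with hq_def
    have hqL : q * L ≤ N := Nat.div_mul_le_self N L
    have hNlt : N < q * L + L := by
      rw [hq_def, Nat.mul_comm]
      calc N = L * (N/L) + N % L := (Nat.div_add_mod N L).symm
      _ < L * (N/L) + L := Nat.add_lt_add_left (Nat.mod_lt N hL) _
    -- cast facts
    have A : (q:ℝ) * J ≤ c := by rw [hJsum, hc_def]; exact_mod_cast hlow
    have Bc : (c:ℝ) ≤ q * J + L := by rw [hJsum, hc_def]; exact_mod_cast hhigh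
    have C : (q:ℝ) * L ≤ N := by exact_mod_cast hqL
    have D : (N:ℝ) ≤ q * L + L := by exact_mod_cast hNlt.le
    have E : (J:ℝ) ≤ L := by exact_mod_cast hJle
    have hJ0 : (0:ℝ) ≤ J := Nat.cast_nonneg _
    have hL0 : (0:ℝ) ≤ L := hLr.le
    have h1 : (c:ℝ) * L ≤ N * J + L * L := by nlinarith
    have h2 : (N:ℝ) * J ≤ c * L + L * L := by nlinarith
    rw [hds, Real.norm_eq_abs, abs_sub_le_iff]
    constructor
    · rw [div_sub_div _ _ hN.ne' hLr.ne', div_le_div_iff₀ (mul_pos hN hLr) hN]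
      nlinarith
    · rw [div_sub_div _ _ hLr.ne' hN.ne', div_le_div_iff₀ (mul_pos hLr hN) hN]
      nlinarith
  have h0 : Tendsto (fun N : ℕ => (L:ℝ)/N) atTop (𝓝 0) :=
    tendsto_const_div_atTop_nhds_zero_nat (L:ℝ)
  have := squeeze_zero_norm' (Filter.eventually_atTop.2 ⟨1, hbound⟩) h0
  exact tendsto_sub_nhds_zero_iff.mp this

section Haar
variable (B : Set ℕ+) (S : Finset ℕ+) (hS : ↑S ⊆ B)

/-- cylinder around `Δ(n)`. -/
def cylZ (n : ℤ) : Set (Hspace B) := cyl B S hS (deltaH B n)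

lemma mem_cylZ {n : ℤ} {h : Hspace B} :
    h ∈ cylZ B S hS n ↔
      ∀ b, ∀ hb : b ∈ S, (h : Gspace B) ⟨b, hS hb⟩ = (n : ZMod ((b : ℕ+) : ℕ)) :=
  Iff.rfl

lemma isClopen_cyl (h0 : Hspace B) : IsClopen (cyl B S hS h0) := by
  have heq : cyl B S hS h0 = ⋂ x : {b : ℕ+ // b ∈ S},
      (fun h : Hspace B => (h : Gspace B) ⟨x.1, hS x.2⟩) ⁻¹'
        {(h0 : Gspace B) ⟨x.1, hS x.2⟩} := by
    ext h
    simp only [cyl, Set.mem_iInter, Set.mem_preimage, Set.mem_singleton_iff, Set.mem_setOf_eq]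
    exact ⟨fun H x => H x.1 x.2, fun H b hb => H ⟨b, hb⟩⟩
  rw [heq]
  have hcont : ∀ x : {b : ℕ+ // b ∈ S},
      Continuous (fun h : Hspace B => (h : Gspace B) ⟨x.1, hS x.2⟩) :=
    fun x => (continuous_apply _).comp continuous_subtype_val
  exact ⟨isClosed_iInter fun x => IsClosed.preimage (hcont x) isClosed_singleton,
    isOpen_iInter_of_finite fun x => IsOpen.preimage (hcont x) (isOpen_discrete _)⟩

lemma exists_delta_matching (h : Hspace B) :
    ∃ n : ℤ, ∀ b, ∀ hb : b ∈ S,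
      (h : Gspace B) ⟨b, hS hb⟩ = (n : ZMod ((b : ℕ+) : ℕ)) := by
  have hmem : (h : Gspace B) ∈ closure ((delta B).range : Set (Gspace B)) := h.2
  set O : Set (Gspace B) := ⋂ x : {b : ℕ+ // b ∈ S},
      (fun g : Gspace B => g ⟨x.1, hS x.2⟩) ⁻¹' {(h : Gspace B) ⟨x.1, hS x.2⟩} with hO_def
  have hO : IsOpen O :=
    isOpen_iInter_of_finite fun x => IsOpen.preimage (continuous_apply _) (isOpen_discrete _)
  have hhO : (h : Gspace B) ∈ O := Set.mem_iInter.2 fun x => rfl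
  obtain ⟨g, hgO, hgR⟩ := _root_.mem_closure_iff.mp hmem O hO hhO
  obtain ⟨n, rfl⟩ := hgR
  refine ⟨n, fun b hb => ?_⟩
  exact (Set.mem_iInter.mp hgO ⟨b, hb⟩).symm

lemma intCast_eq_of_dvd {b L : ℕ} (hbL : b ∣ L) {n m : ℤ} (h : (L:ℤ) ∣ n - m) :
    ((n : ℤ) : ZMod b) = ((m : ℤ) : ZMod b) := by
  have h2 : ((n - m : ℤ) : ZMod b) = 0 := (ZMod.intCast_zmod_eq_zero_iff_dvd _ _).mpr
    (dvd_trans (Int.natCast_dvd_natCast.mpr hbL) h)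
  push_cast at h2
  linear_combination h2

lemma dvd_lcm_int {x : ℤ} (hx : ∀ b : ℕ+, b ∈ S → ((b:ℕ):ℤ) ∣ x) :
    ((lcmS S : ℕ) : ℤ) ∣ x := by
  rw [← Int.natAbs_dvd_natAbs]
  simp only [Int.natAbs_natCast]
  have : ∀ b : ℕ+, b ∈ S → (b:ℕ) ∣ x.natAbs := by
    intro b hb
    have := hx b hb
    rw [← Int.natAbs_dvd_natAbs] at this
    simpa using this
  exact Finset.lcm_dvd fun b hb => this b hb

lemma exists_mem_cylZ (h : Hspace B) :
    ∃ j : ℕ, j < lcmS S ∧ h ∈ cylZ B S hS ((j:ℤ)+1) := by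
  obtain ⟨n, hn⟩ := exists_delta_matching B S hS h
  have hL : 0 < lcmS S := lcmS_pos S
  have hLz : (0:ℤ) < (lcmS S : ℤ) := by exact_mod_cast hL
  set j : ℕ := ((n - 1) % (lcmS S : ℤ)).toNat with hj_def
  have hj0 : 0 ≤ (n-1) % (lcmS S : ℤ) := Int.emod_nonneg _ hLz.ne'
  have hjlt : (n-1) % (lcmS S : ℤ) < (lcmS S : ℤ) := Int.emod_lt_of_pos _ hLz
  have hjz : (j:ℤ) = (n-1) % (lcmS S : ℤ) := Int.toNat_of_nonneg hj0
  have hjltn : j < lcmS S := by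
    have : (j:ℤ) < (lcmS S : ℤ) := hjz ▸ hjlt
    exact_mod_cast this
  refine ⟨j, hjltn, ?_⟩
  rw [mem_cylZ]
  intro b hb
  rw [hn b hb]
  refine intCast_eq_of_dvd (L := lcmS S) (Finset.dvd_lcm hb) ?_
  · refine ⟨(n-1) / (lcmS S : ℤ), ?_⟩
    have : n - ((j:ℤ)+1) = (n - 1) - (n-1) % (lcmS S : ℤ) := by rw [hjz]; ring
    rw [this, Int.emod_def]
    ring

lemma cylZ_disjoint {j j' : ℕ} (hj : j < lcmS S) (hj' : j' < lcmS S) (hne : j ≠ j') :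
    Disjoint (cylZ B S hS ((j:ℤ)+1)) (cylZ B S hS ((j':ℤ)+1)) := by
  rw [Set.disjoint_left]
  intro h hmem hmem'
  rw [mem_cylZ] at hmem hmem'
  have key : ∀ b : ℕ+, b ∈ S → ((b:ℕ):ℤ) ∣ ((j:ℤ) - (j':ℤ)) := by
    intro b hb
    have e : (((j:ℤ)+1 : ℤ) : ZMod ((b:ℕ+):ℕ)) = (((j':ℤ)+1 : ℤ) : ZMod ((b:ℕ+):ℕ)) := by
      rw [← hmem b hb, ← hmem' b hb]
    have e2 : (((j:ℤ) - (j':ℤ) : ℤ) : ZMod ((b:ℕ+):ℕ)) = 0 := by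
      push_cast at e ⊢
      linear_combination e
    exact (ZMod.intCast_zmod_eq_zero_iff_dvd _ _).mp e2
  have hdvd : ((lcmS S : ℕ) : ℤ) ∣ (j:ℤ) - (j':ℤ) := dvd_lcm_int S key
  rw [← Int.natAbs_dvd_natAbs] at hdvd
  simp only [Int.natAbs_natCast] at hdvd
  have habs : ((j:ℤ) - (j':ℤ)).natAbs < lcmS S := by omega
  have := Nat.eq_zero_of_dvd_of_lt hdvd habs
  omega

lemma pairwiseDisjoint_cylZ :
    (↑(Finset.range (lcmS S)) : Set ℕ).PairwiseDisjoint
      (fun j => cylZ B S hS ((j:ℤ)+1)) := by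
  intro j hj j' hj' hne
  simp only [Finset.coe_range, Set.mem_Iio] at hj hj'
  exact cylZ_disjoint B S hS hj hj' hne

lemma measure_cylZ_eq (μ : Measure (Hspace B)) [μ.IsAddLeftInvariant] (n m : ℤ) :
    μ (cylZ B S hS n) = μ (cylZ B S hS m) := by
  have hpre : (fun h => deltaH B (n - m) + h) ⁻¹' (cylZ B S hS n) = cylZ B S hS m := by
    ext h
    simp only [Set.mem_preimage, mem_cylZ]
    constructor
    · intro H b hb
      have := H b hb
      rw [AddSubgroup.coe_add] at this
      simp only [Pi.add_apply] at this
      have hd : ((deltaH B (n-m) : Gspace B) ⟨b, hS hb⟩) = ((n - m : ℤ) : ZMod ((b:ℕ+):ℕ)) := rfl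
      rw [hd] at this
      push_cast at this ⊢
      linear_combination this
    · intro H b hb
      rw [AddSubgroup.coe_add]
      simp only [Pi.add_apply]
      have hd : ((deltaH B (n-m) : Gspace B) ⟨b, hS hb⟩) = ((n - m : ℤ) : ZMod ((b:ℕ+):ℕ)) := rfl
      rw [hd, H b hb]
      push_cast
      ring
  rw [← hpre, measure_preimage_add]

lemma measure_cylZ_val (μ : Measure (Hspace B)) [IsProbabilityMeasure μ]
    [μ.IsAddLeftInvariant] (n : ℤ) :
    μ (cylZ B S hS n) = ((lcmS S : ℕ) : ℝ≥0∞)⁻¹ := by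
  classical
  have hU : ⋃ j ∈ Finset.range (lcmS S), cylZ B S hS ((j:ℤ)+1) = Set.univ := by
    ext h
    simp only [Set.mem_iUnion, Set.mem_univ, iff_true, Finset.mem_range]
    obtain ⟨j, hj, hmem⟩ := exists_mem_cylZ B S hS h
    exact ⟨j, hj, hmem⟩
  have h1 : μ (⋃ j ∈ Finset.range (lcmS S), cylZ B S hS ((j:ℤ)+1))
      = ∑ j ∈ Finset.range (lcmS S), μ (cylZ B S hS ((j:ℤ)+1)) :=
    measure_biUnion_finset (pairwiseDisjoint_cylZ B S hS)
      (fun b _ => (isClopen_cyl B S hS _).2.measurableSet)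
  rw [hU, measure_univ] at h1
  have hconst : ∀ j ∈ Finset.range (lcmS S),
      μ (cylZ B S hS ((j:ℤ)+1)) = μ (cylZ B S hS n) :=
    fun j _ => measure_cylZ_eq B S hS μ _ _
  rw [Finset.sum_congr rfl hconst, Finset.sum_const, Finset.card_range, nsmul_eq_mul] at h1
  have hL0 : ((lcmS S : ℕ) : ℝ≥0∞) ≠ 0 := by
    simp only [ne_eq, Nat.cast_eq_zero]
    exact (lcmS_pos S).ne'
  have hLtop : ((lcmS S : ℕ) : ℝ≥0∞) ≠ ⊤ := ENNReal.natCast_ne_top _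
  calc μ (cylZ B S hS n)
      = ((lcmS S:ℕ):ℝ≥0∞)⁻¹ * (((lcmS S:ℕ):ℝ≥0∞) * μ (cylZ B S hS n)) := by
        rw [← mul_assoc, ENNReal.inv_mul_cancel hL0 hLtop, one_mul]
    _ = ((lcmS S:ℕ):ℝ≥0∞)⁻¹ := by rw [← h1, mul_one]

open Classical in
def Vset : Set (Hspace B) :=
  ⋃ j ∈ (Finset.range (lcmS S)).filter (fun i : ℕ => ((i:ℤ)+1) ∈ FreeSetN (ASet B S)),
    cylZ B S hS ((j:ℤ)+1)

lemma isOpen_Vset : IsOpen (Vset B S hS) :=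
  isOpen_biUnion fun _ _ => (isClopen_cyl B S hS _).2

lemma Vset_subset_window : Vset B S hS ⊆ window B := by
  classical
  intro h hmem
  simp only [Vset, Set.mem_iUnion, Finset.mem_filter, Finset.mem_range] at hmem
  obtain ⟨j, ⟨hjL, hjF⟩, hcyl⟩ := hmem
  intro bB hb0
  have hS' : ↑(insert (bB : ℕ+) S) ⊆ B := by
    intro x hx
    rw [Finset.coe_insert] at hx
    rcases hx with hx | hx
    · rw [hx]; exact bB.2
    · exact hS hx
  obtain ⟨n, hn⟩ := exists_delta_matching B (insert (bB : ℕ+) S) hS' h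
  have h0 : ((n:ℤ) : ZMod ((bB : ℕ+) : ℕ)) = 0 := by
    rw [← hn (bB : ℕ+) (Finset.mem_insert_self _ _)]
    exact hb0
  have hbn : (((bB : ℕ+):ℕ):ℤ) ∣ n := (ZMod.intCast_zmod_eq_zero_iff_dvd _ _).mp h0
  have hcong : ∀ b : ℕ+, b ∈ S → ((b:ℕ):ℤ) ∣ (n - ((j:ℤ)+1)) := by
    intro b hb
    have e1 := hn b (Finset.mem_insert_of_mem hb)
    have e2 := (mem_cylZ B S hS).mp hcyl b hb
    have e3 : ((n:ℤ) : ZMod ((b:ℕ+):ℕ)) = (((j:ℤ)+1 : ℤ) : ZMod ((b:ℕ+):ℕ)) := by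
      rw [← e1]; exact e2
    have e4 : ((n - ((j:ℤ)+1) : ℤ) : ZMod ((b:ℕ+):ℕ)) = 0 := by
      push_cast at e3 ⊢
      linear_combination e3
    exact (ZMod.intCast_zmod_eq_zero_iff_dvd _ _).mp e4
  have hLd : ((lcmS S:ℕ):ℤ) ∣ n - ((j:ℤ)+1) := dvd_lcm_int S hcong
  have hgmem : (Nat.gcd ((bB : ℕ+):ℕ) (lcmS S)) ∈ ASet B S := ⟨(bB : ℕ+), bB.2, rfl⟩
  refine hjF _ hgmem ?_
  have d1 : ((Nat.gcd ((bB : ℕ+):ℕ) (lcmS S) : ℕ):ℤ) ∣ n :=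
    dvd_trans (Int.natCast_dvd_natCast.mpr (Nat.gcd_dvd_left _ _)) hbn
  have d2 : ((Nat.gcd ((bB : ℕ+):ℕ) (lcmS S) : ℕ):ℤ) ∣ n - ((j:ℤ)+1) :=
    dvd_trans (Int.natCast_dvd_natCast.mpr (Nat.gcd_dvd_right _ _)) hLd
  have := dvd_sub d1 d2
  simpa using this

lemma Vset_subset_interior : Vset B S hS ⊆ interior (window B) :=
  interior_maximal (Vset_subset_window B S hS) (isOpen_Vset B S hS)

lemma Vset_mono {S1 S2 : Finset ℕ+} (h12 : S1 ⊆ S2) (hS1 : ↑S1 ⊆ B) (hS2 : ↑S2 ⊆ B) :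
    Vset B S1 hS1 ⊆ Vset B S2 hS2 := by
  classical
  intro h hmem
  simp only [Vset, Set.mem_iUnion, Finset.mem_filter, Finset.mem_range] at hmem ⊢
  obtain ⟨j, ⟨hjL, hjF⟩, hcyl⟩ := hmem
  obtain ⟨j', hj'L, hj'mem⟩ := exists_mem_cylZ B S2 hS2 h
  refine ⟨j', ⟨hj'L, ?_⟩, hj'mem⟩
  intro a ha hdvd
  obtain ⟨b', hb'B, rfl⟩ := ha
  have hcong : ∀ b : ℕ+, b ∈ S1 → ((b:ℕ):ℤ) ∣ ((j:ℤ) - (j':ℤ)) := by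
    intro b hb
    have e1 := (mem_cylZ B S1 hS1).mp hcyl b hb
    have e2 := (mem_cylZ B S2 hS2).mp hj'mem b (h12 hb)
    have e3 : (((j:ℤ)+1 : ℤ) : ZMod ((b:ℕ+):ℕ)) = (((j':ℤ)+1 : ℤ) : ZMod ((b:ℕ+):ℕ)) := by
      rw [← e1]; exact e2
    have e4 : ((((j:ℤ) - (j':ℤ)) : ℤ) : ZMod ((b:ℕ+):ℕ)) = 0 := by
      push_cast at e3 ⊢
      linear_combination e3
    exact (ZMod.intCast_zmod_eq_zero_iff_dvd _ _).mp e4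
  have hL1 : ((lcmS S1:ℕ):ℤ) ∣ (j:ℤ) - (j':ℤ) := dvd_lcm_int S1 hcong
  have hgg : (Nat.gcd ((b':ℕ+):ℕ) (lcmS S1)) ∣ (Nat.gcd ((b':ℕ+):ℕ) (lcmS S2)) :=
    Nat.dvd_gcd (Nat.gcd_dvd_left _ _)
      ((Nat.gcd_dvd_right _ _).trans (Finset.lcm_dvd fun b hb => Finset.dvd_lcm (h12 hb)))
  refine hjF _ ⟨b', hb'B, rfl⟩ ?_
  have d1 : ((Nat.gcd ((b':ℕ+):ℕ) (lcmS S1) : ℕ):ℤ) ∣ (j':ℤ)+1 :=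
    dvd_trans (Int.natCast_dvd_natCast.mpr hgg) hdvd
  have d2 : ((Nat.gcd ((b':ℕ+):ℕ) (lcmS S1) : ℕ):ℤ) ∣ (j:ℤ) - (j':ℤ) :=
    dvd_trans (Int.natCast_dvd_natCast.mpr (Nat.gcd_dvd_right _ _)) hL1
  have := dvd_add d1 d2
  have heq : ((j':ℤ)+1) + ((j:ℤ) - (j':ℤ)) = (j:ℤ)+1 := by ring
  rwa [heq] at this

lemma interior_window_subset :
    interior (window B) ⊆ ⋃ i : {S : Finset ℕ+ // ↑S ⊆ B}, Vset B i.1 i.2 := by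
  classical
  intro h hmem
  rw [mem_interior] at hmem
  obtain ⟨U, hUsub, hUopen, hhU⟩ := hmem
  obtain ⟨O, hOopen, hOeq⟩ := isOpen_induced_iff.mp hUopen
  have hhO : (h : Gspace B) ∈ O := by
    rw [← hOeq] at hhU; exact hhU
  obtain ⟨I, u, hIu, hpi⟩ := isOpen_pi_iff.mp hOopen (h : Gspace B) hhO
  set S : Finset ℕ+ := I.image (fun x : ↑B => (x : ℕ+)) with hS_def
  have hSB : ↑S ⊆ B := by
    intro x hx
    rw [hS_def] at hx
    simp only [Finset.coe_image, Set.mem_image, Finset.mem_coe] at hx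
    obtain ⟨y, _, rfl⟩ := hx
    exact y.2
  have hcylsub : cyl B S hSB h ⊆ U := by
    intro h' hh'
    have : (h' : Gspace B) ∈ O := by
      apply hpi
      intro i hi
      have hiS : (i : ℕ+) ∈ S := Finset.mem_image_of_mem _ hi
      have hcoe := hh' (i : ℕ+) hiS
      have hcoord : (⟨(i:ℕ+), hSB hiS⟩ : ↑B) = i := Subtype.ext rfl
      rw [hcoord] at hcoe
      rw [hcoe]
      exact (hIu i hi).2
    rw [← hOeq]
    exact this
  obtain ⟨j, hjL, hjmem⟩ := exists_mem_cylZ B S hSB h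
  have hfree : ((j:ℤ)+1) ∈ FreeSetN (ASet B S) := by
    intro a ha hdvd
    obtain ⟨b', hb'B, rfl⟩ := ha
    obtain ⟨t, ht⟩ := hdvd
    set A := Int.gcdA ((b':ℕ+):ℕ) (lcmS S) with hA_def
    set Bz := Int.gcdB ((b':ℕ+):ℕ) (lcmS S) with hB_def
    have hbez : ((Nat.gcd ((b':ℕ+):ℕ) (lcmS S) : ℕ) : ℤ)
        = ((b':ℕ+):ℕ) * A + (lcmS S : ℕ) * Bz := by
      have := Int.gcd_eq_gcd_ab (((b':ℕ+):ℕ) : ℤ) ((lcmS S : ℕ) : ℤ)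
      rw [Int.gcd_natCast_natCast] at this
      exact this
    set m : ℤ := (((b':ℕ+):ℕ) : ℤ) * A * t with hm_def
    have hb'm : (((b':ℕ+):ℕ):ℤ) ∣ m := ⟨A * t, by rw [hm_def]; ring⟩
    have hLd : ((lcmS S:ℕ):ℤ) ∣ m - ((j:ℤ)+1) := by
      refine ⟨-Bz * t, ?_⟩
      rw [hm_def, ht, hbez]
      ring
    have hdm : deltaH B m ∈ cyl B S hSB h := by
      intro b hb
      have e1 := (mem_cylZ B S hSB).mp hjmem b hb
      have : (deltaH B m : Gspace B) ⟨b, hSB hb⟩ = ((m : ℤ) : ZMod ((b:ℕ+):ℕ)) := rfl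
      rw [this, e1]
      exact intCast_eq_of_dvd (Finset.dvd_lcm hb) hLd
    have hwin := hUsub (hcylsub hdm)
    have h0 : (deltaH B m : Gspace B) ⟨b', hb'B⟩ = 0 := by
      show ((m:ℤ) : ZMod ((b':ℕ+):ℕ)) = 0
      exact (ZMod.intCast_zmod_eq_zero_iff_dvd _ _).mpr hb'm
    exact hwin ⟨b', hb'B⟩ h0
  refine Set.mem_iUnion.mpr ⟨⟨S, hSB⟩, ?_⟩
  simp only [Vset, Set.mem_iUnion, Finset.mem_filter, Finset.mem_range]
  exact ⟨j, ⟨hjL, hfree⟩, hjmem⟩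


lemma measure_Vset (μ : Measure (Hspace B)) [IsProbabilityMeasure μ]
    [μ.IsAddLeftInvariant] :
    μ (Vset B S hS) = (Jc B S : ℝ≥0∞) / ((lcmS S : ℕ) : ℝ≥0∞) := by
  classical
  have hsub : (↑((Finset.range (lcmS S)).filter
      (fun i : ℕ => ((i:ℤ)+1) ∈ FreeSetN (ASet B S))) : Set ℕ)
      ⊆ ↑(Finset.range (lcmS S)) := Finset.coe_subset.mpr (Finset.filter_subset _ _)
  rw [Vset, measure_biUnion_finset ((pairwiseDisjoint_cylZ B S hS).subset hsub)
    (fun b _ => (isClopen_cyl B S hS _).2.measurableSet)]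
  rw [Finset.sum_congr rfl (fun j _ => measure_cylZ_val B S hS μ _),
    Finset.sum_const, nsmul_eq_mul, div_eq_mul_inv]
  congr 1

end Haar

/-- `m_H(int W)` equals the supremum over finite `S ⊆ B` of the natural
density `d(F_{A_S})` (which exists), and this supremum is at most the lower density of `E`. -/
theorem statement10 (B : Set ℕ+) (hB : B.Infinite)
    (μ : Measure (Hspace B)) [IsProbabilityMeasure μ] [μ.IsAddHaarMeasure] :
    (∀ S : Finset ℕ+, ↑S ⊆ B →
        Filter.Tendsto (densSeq (FreeSetN (ASet B S))) Filter.atTop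
          (nhds (lowerDensity (FreeSetN (ASet B S))))) ∧
    (μ (interior (window B))).toReal =
      (⨆ S : {S : Finset ℕ+ // ↑S ⊆ B}, lowerDensity (FreeSetN (ASet B S.val))) ∧
    (⨆ S : {S : Finset ℕ+ // ↑S ⊆ B}, lowerDensity (FreeSetN (ASet B S.val))) ≤
      lowerDensity (Eset B) := by
  classical
  have hTendsto : ∀ S : Finset ℕ+,
      Filter.Tendsto (densSeq (FreeSetN (ASet B S))) Filter.atTop
        (nhds ((Jc B S : ℝ) / (lcmS S : ℝ))) := by
    intro S
    have hL := lcmS_pos S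
    have hper : ∀ n : ℤ, (n + (lcmS S : ℤ)) ∈ FreeSetN (ASet B S)
        ↔ n ∈ FreeSetN (ASet B S) := free_periodic B S
    have h := tendsto_densSeq_periodic (fun n => n ∈ FreeSetN (ASet B S)) (lcmS S) hL hper
    rw [Set.setOf_mem_eq] at h
    have hJ : (((Finset.range (lcmS S)).filter
        (fun i : ℕ => ((i:ℤ)+1) ∈ FreeSetN (ASet B S))).card : ℝ) = (Jc B S : ℝ) := by
      norm_cast
    rwa [hJ] at h
  have hLow : ∀ S : Finset ℕ+,
      lowerDensity (FreeSetN (ASet B S)) = (Jc B S : ℝ) / (lcmS S : ℝ) :=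
    fun S => (hTendsto S).liminf_eq
  haveI : Nonempty {S : Finset ℕ+ // ↑S ⊆ B} := ⟨⟨∅, by simp⟩⟩
  refine ⟨fun S _ => by rw [hLow S]; exact hTendsto S, ?_, ?_⟩
  · have hint : interior (window B) = ⋃ i : {S : Finset ℕ+ // ↑S ⊆ B}, Vset B i.1 i.2 :=
      subset_antisymm (interior_window_subset B)
        (Set.iUnion_subset fun i => Vset_subset_interior B i.1 i.2)
    have hdir : Directed (· ⊆ ·) (fun i : {S : Finset ℕ+ // ↑S ⊆ B} => Vset B i.1 i.2) := by
      intro i1 i2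
      have hu : ↑(i1.1 ∪ i2.1) ⊆ B := by
        intro x hx
        rw [Finset.coe_union] at hx
        rcases hx with hx | hx
        · exact i1.2 hx
        · exact i2.2 hx
      exact ⟨⟨i1.1 ∪ i2.1, hu⟩, Vset_mono B Finset.subset_union_left _ _,
        Vset_mono B Finset.subset_union_right _ _⟩
    have hmeaseq : μ (interior (window B))
        = ⨆ i : {S : Finset ℕ+ // ↑S ⊆ B}, μ (Vset B i.1 i.2) := by
      rw [hint]
      exact hdir.measure_iUnion
    rw [hmeaseq, ENNReal.toReal_iSup (fun i => measure_ne_top μ _)]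
    refine iSup_congr fun i => ?_
    rw [measure_Vset B i.1 i.2 μ, hLow i.1, ENNReal.toReal_div]
    norm_num
  · refine ciSup_le fun i => ?_
    have hsub : FreeSetN (ASet B i.1) ⊆ Eset B := fun x hx =>
      Set.mem_iUnion.mpr ⟨i.1, Set.mem_iUnion.mpr ⟨i.2, hx⟩⟩
    exact lowerDensity_mono hsub


end BFree
end
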